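/- arXiv:0706.1928 — 2 statements merged into one kernel-verified Lean document; each statement's English description precedes it below -/
import Mathlib

section
/- For a probability measure family p(x,dy) on R^d with tail bound ∫_{|y|>n} p(x,dy) ≤ C n^{-α} for all n>0 and some α ∈ (0,2), one has the uniform truncated second-moment bound ∫_{|y|<ε} min(1,|y|^2) p(x, dy/h) h^{-α} ≤ C' ε^{2-α} for all 0<ε<1 and h>0, with a constant C' depending only on C and α. -/
open MeasureTheory Filter Set
open scoped ENNReal Topology

/-- Uniform truncated second-moment bound for a family of probability measures with
uniform stable-like tails. -/
theorem stmt0 (d : ℕ) (α : ℝ) (hα : 0 < α ∧ α < 2) (C : ℝ) (hC : 0 < C)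
    (p : EuclideanSpace ℝ (Fin d) → Measure (EuclideanSpace ℝ (Fin d)))
    (hp : ∀ x, IsProbabilityMeasure (p x))
    (htail : ∀ x, ∀ n : ℝ, 0 < n → p x {y | n < ‖y‖} ≤ ENNReal.ofReal (C * n ^ (-α))) :
    ∃ C' : ℝ, 0 < C' ∧ ∀ x, ∀ ε h : ℝ, 0 < ε → ε < 1 → 0 < h →
      (∫⁻ y in {y | ‖y‖ < ε}, ENNReal.ofReal (min 1 (‖y‖ ^ 2))
          ∂(Measure.map (fun z => h • z) (p x))) * ENNReal.ofReal (h ^ (-α))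
        ≤ ENNReal.ofReal (C' * ε ^ (2 - α)) := by
  obtain ⟨hα0, hα2⟩ := hα
  have h2α : (0:ℝ) < 2 - α := by linarith
  refine ⟨2 * C / (2 - α), div_pos (by linarith) h2α, ?_⟩
  intro x ε h hε hε1 hh
  set μ := Measure.map (fun z => h • z) (p x) with hμ
  have hsm : Measurable (fun z : EuclideanSpace ℝ (Fin d) => h • z) :=
    (continuous_const_smul h).measurable
  have hcont : Continuous fun y : EuclideanSpace ℝ (Fin d) => min 1 (‖y‖ ^ 2) :=
    continuous_const.min (continuous_norm.pow 2)
  have hεsq : (0:ℝ) < ε ^ 2 := by positivity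
  -- Layer cake
  rw [lintegral_eq_lintegral_meas_lt _
    (Filter.Eventually.of_forall fun y => le_min zero_le_one (sq_nonneg _))
    hcont.measurable.aemeasurable]
  -- Pointwise bound on the tail measures
  have key : ∀ t ∈ Ioi (0:ℝ), (μ.restrict {y | ‖y‖ < ε}) {a | t < min 1 (‖a‖ ^ 2)}
      ≤ (Ioc (0:ℝ) (ε ^ 2)).indicator
          (fun t => ENNReal.ofReal (C * h ^ α * t ^ (-(α/2)))) t := by
    intro t ht
    have ht0 : (0:ℝ) < t := ht
    have hS : MeasurableSet {a : EuclideanSpace ℝ (Fin d) | t < min 1 (‖a‖ ^ 2)} :=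
      measurableSet_lt measurable_const hcont.measurable
    rw [Measure.restrict_apply hS]
    by_cases htε : t ≤ ε ^ 2
    · rw [indicator_of_mem (mem_Ioc.mpr ⟨ht0, htε⟩)]
      have hS2 : MeasurableSet {a : EuclideanSpace ℝ (Fin d) | t < ‖a‖ ^ 2} :=
        measurableSet_lt measurable_const ((continuous_norm.pow 2).measurable)
      have hn : (0:ℝ) < Real.sqrt t / h := div_pos (Real.sqrt_pos.mpr ht0) hh
      calc μ ({a | t < min 1 (‖a‖ ^ 2)} ∩ {y | ‖y‖ < ε})
          ≤ μ {a | t < ‖a‖ ^ 2} := by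
            refine measure_mono fun a ha => ?_
            exact lt_of_lt_of_le (show t < min 1 (‖a‖ ^ 2) from ha.1) (min_le_right _ _)
        _ = p x {z | Real.sqrt t / h < ‖z‖} := by
            rw [hμ, Measure.map_apply hsm hS2]
            congr 1
            ext z
            simp only [mem_preimage, mem_setOf_eq, norm_smul, Real.norm_eq_abs,
              abs_of_pos hh]
            rw [div_lt_iff₀ hh, mul_comm ‖z‖ h]
            constructor
            · intro h1
              have : Real.sqrt t < Real.sqrt ((h * ‖z‖) ^ 2) :=
                Real.sqrt_lt_sqrt ht0.le h1
              rwa [Real.sqrt_sq (by positivity)] at this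
            · intro h1
              have h2 : (0:ℝ) < h * ‖z‖ := lt_of_le_of_lt (Real.sqrt_nonneg t) h1
              exact (Real.sqrt_lt' h2).mp h1
        _ ≤ ENNReal.ofReal (C * (Real.sqrt t / h) ^ (-α)) := htail x _ hn
        _ = ENNReal.ofReal (C * h ^ α * t ^ (-(α/2))) := by
            congr 1
            rw [Real.div_rpow (Real.sqrt_nonneg t) hh.le,
              Real.sqrt_eq_rpow, ← Real.rpow_mul ht0.le,
              Real.rpow_neg hh.le,
              show (1/2) * (-α) = -(α/2) by ring]
            have hα' : h ^ α ≠ 0 := (Real.rpow_pos_of_pos hh α).ne'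
            field_simp
    · rw [indicator_of_notMem (fun hmem => htε hmem.2)]
      have : {a : EuclideanSpace ℝ (Fin d) | t < min 1 (‖a‖ ^ 2)} ∩ {y | ‖y‖ < ε} = ∅ := by
        ext a
        simp only [mem_inter_iff, mem_setOf_eq, mem_empty_iff_false, iff_false, not_and]
        intro h1 h2
        push_neg at htε
        have : ‖a‖ ^ 2 < ε ^ 2 := by
          have := abs_of_nonneg (norm_nonneg a)
          nlinarith [norm_nonneg a]
        have : min 1 (‖a‖ ^ 2) ≤ ‖a‖ ^ 2 := min_le_right _ _
        linarith
      rw [this, measure_empty]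
  -- Integrate the bound
  have hIint : IntegrableOn (fun t : ℝ => C * h ^ α * t ^ (-(α/2))) (Ioc 0 (ε ^ 2)) := by
    refine Integrable.const_mul ?_ _
    exact (intervalIntegrable_iff_integrableOn_Ioc_of_le hεsq.le).mp
      (intervalIntegral.intervalIntegrable_rpow' (by linarith))
  have hval : ∫ t in Ioc (0:ℝ) (ε ^ 2), C * h ^ α * t ^ (-(α/2))
      = C * h ^ α * ((ε ^ 2) ^ (-(α/2) + 1) / (-(α/2) + 1)) := by
    rw [← intervalIntegral.integral_of_le hεsq.le, intervalIntegral.integral_const_mul,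
      integral_rpow (Or.inl (by linarith))]
    rw [Real.zero_rpow (by linarith), sub_zero]
  have hbound : ∫⁻ t in Ioi (0:ℝ), (μ.restrict {y | ‖y‖ < ε}) {a | t < min 1 (‖a‖ ^ 2)}
      ≤ ENNReal.ofReal (C * h ^ α * ((ε ^ 2) ^ (-(α/2) + 1) / (-(α/2) + 1))) := by
    calc ∫⁻ t in Ioi (0:ℝ), (μ.restrict {y | ‖y‖ < ε}) {a | t < min 1 (‖a‖ ^ 2)}
        ≤ ∫⁻ t in Ioi (0:ℝ), (Ioc (0:ℝ) (ε ^ 2)).indicator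
            (fun t => ENNReal.ofReal (C * h ^ α * t ^ (-(α/2)))) t :=
          setLIntegral_mono ((ENNReal.measurable_ofReal.comp (by fun_prop)).indicator
            measurableSet_Ioc) key
      _ = ∫⁻ t in Ioc (0:ℝ) (ε ^ 2), ENNReal.ofReal (C * h ^ α * t ^ (-(α/2))) := by
          rw [lintegral_indicator measurableSet_Ioc, Measure.restrict_restrict
            measurableSet_Ioc, inter_eq_self_of_subset_left Ioc_subset_Ioi_self]
      _ = ENNReal.ofReal (C * h ^ α * ((ε ^ 2) ^ (-(α/2) + 1) / (-(α/2) + 1))) := by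
          rw [← hval, ← ofReal_integral_eq_lintegral_ofReal hIint]
          filter_upwards [ae_restrict_mem measurableSet_Ioc] with t ht
          have h1 : (0:ℝ) ≤ t ^ (-(α/2)) := Real.rpow_nonneg ht.1.le _
          have h2 : (0:ℝ) < h ^ α := Real.rpow_pos_of_pos hh α
          exact mul_nonneg (mul_nonneg hC.le h2.le) h1
  refine le_trans (mul_le_mul_left hbound _) ?_
  rw [← ENNReal.ofReal_mul (mul_nonneg (mul_nonneg hC.le
    (Real.rpow_pos_of_pos hh α).le) (div_nonneg (Real.rpow_nonneg hεsq.le _)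
    (by linarith)))]
  apply ENNReal.ofReal_le_ofReal
  have e1 : ((ε:ℝ) ^ 2) ^ (-(α/2) + 1) = ε ^ (2 - α) := by
    rw [← Real.rpow_natCast ε 2, ← Real.rpow_mul hε.le]
    norm_num
    ring_nf
  have e2 : h ^ α * h ^ (-α) = 1 := by
    rw [← Real.rpow_add hh]
    simp
  rw [e1]
  have : C * h ^ α * (ε ^ (2 - α) / (-(α/2) + 1)) * h ^ (-α)
      = (h ^ α * h ^ (-α)) * (C * (ε ^ (2 - α) / (-(α/2) + 1))) := by ring
  rw [this, e2, one_mul]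
  rw [div_eq_mul_inv, ← mul_assoc]
  have : (-(α/2) + 1)⁻¹ = 2 / (2 - α) := by
    rw [show -(α/2) + 1 = (2 - α)/2 by ring, inv_div]
  rw [this]
  have hpow : (0:ℝ) ≤ ε ^ (2 - α) := Real.rpow_nonneg hε.le _
  calc C * ε ^ (2 - α) * (2 / (2 - α)) = 2 * C / (2 - α) * ε ^ (2 - α) := by ring
    _ ≤ 2 * C / (2 - α) * ε ^ (2 - α) := le_refl _
end

section
/- Let p be a probability measure on R^d with p({0})=0 such that for every open Ω ⊆ S^{d-1} with boundary of measure zero, ∫_{|y|>n, ȳ∈Ω} p(dy) ~ (1/(α n^α)) ∫_Ω S(s) dس as n→∞, where ȳ = y/|y|, α∈(0,2), and S is a continuous nonnegative function on the sphere. Then for any 0<A<B and such Ω, ∫_{A<|z|<B, z̄∈Ω} p(dz/h) h^{-α} → ∫_A^B |z|^{-(α+1)} d|z| · ∫_Ω S(s) ds as h→0. -/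
open MeasureTheory Filter Set
open scoped ENNReal Topology

/-- Convergence of rescaled measures on annular cone sets, for a probability measure in the
normal domain of attraction of a symmetric `α`-stable law with spectral density `S` with
respect to the surface measure `σ` on the unit sphere. -/
theorem stmt1 (d : ℕ) (α : ℝ) (hα : 0 < α ∧ α < 2)
    (p : Measure (EuclideanSpace ℝ (Fin d))) [IsProbabilityMeasure p]
    (hp0 : p {0} = 0)
    (σ : Measure (EuclideanSpace ℝ (Fin d))) [IsFiniteMeasure σ]
    (hσsphere : ∀ s : Set (EuclideanSpace ℝ (Fin d)), σ s = σ (s ∩ Metric.sphere 0 1))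
    (S : EuclideanSpace ℝ (Fin d) → ℝ) (hScont : Continuous S) (hSnonneg : ∀ s, 0 ≤ S s)
    (hattr : ∀ U : Set (EuclideanSpace ℝ (Fin d)), IsOpen U → σ (frontier U) = 0 →
      Tendsto (fun n : ℝ => (p {y | n < ‖y‖ ∧ ‖y‖⁻¹ • y ∈ U}).toReal * (α * n ^ α))
        atTop (𝓝 (∫ s in U, S s ∂σ))) :
    ∀ U : Set (EuclideanSpace ℝ (Fin d)), IsOpen U → σ (frontier U) = 0 →
      ∀ A B : ℝ, 0 < A → A < B →
        Tendsto (fun h : ℝ =>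
            ((Measure.map (fun z => h • z) p)
              {z | A < ‖z‖ ∧ ‖z‖ < B ∧ ‖z‖⁻¹ • z ∈ U}).toReal * h ^ (-α))
          (𝓝[>] 0)
          (𝓝 ((∫ r in A..B, r ^ (-(α + 1))) * ∫ s in U, S s ∂σ)) := by
  obtain ⟨hα0, hα2⟩ := hα
  intro U hUopen hUfront A B hA hAB
  set I := ∫ s in U, S s ∂σ with hIdef
  have hB : 0 < B := hA.trans hAB
  have hT := hattr U hUopen hUfront
  have hmeas2 : Measurable fun z : EuclideanSpace ℝ (Fin d) => ‖z‖⁻¹ • z :=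
    (measurable_norm.inv).smul measurable_id
  -- key limit lemma
  have key : ∀ C : ℝ, 0 < C →
      Tendsto (fun h : ℝ => (p {y | C / h < ‖y‖ ∧ ‖y‖⁻¹ • y ∈ U}).toReal * h ^ (-α))
        (𝓝[>] (0:ℝ)) (𝓝 (I / (α * C ^ α))) := by
    intro C hC
    have h1 : Tendsto (fun h : ℝ => C / h) (𝓝[>] (0:ℝ)) atTop := by
      simpa [div_eq_mul_inv] using Tendsto.const_mul_atTop hC tendsto_inv_nhdsGT_zero
    have h2 := (hT.comp h1).div_const (α * C ^ α)
    refine h2.congr' ?_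
    filter_upwards [self_mem_nhdsWithin] with h hh
    have hh : (0:ℝ) < h := hh
    have hCα : (0:ℝ) < C ^ α := Real.rpow_pos_of_pos hC α
    have hhα : (0:ℝ) < h ^ α := Real.rpow_pos_of_pos hh α
    simp only [Function.comp]
    rw [Real.div_rpow hC.le hh.le, Real.rpow_neg hh.le]
    field_simp
  have hI0 : 0 ≤ I := by
    apply setIntegral_nonneg hUopen.measurableSet
    exact fun s _ => hSnonneg s
  -- squeeze for the closed lower tail
  have key2 : Tendsto (fun h : ℝ => (p {y | B / h ≤ ‖y‖ ∧ ‖y‖⁻¹ • y ∈ U}).toReal * h ^ (-α))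
      (𝓝[>] (0:ℝ)) (𝓝 (I / (α * B ^ α))) := by
    rw [Metric.tendsto_nhds]
    intro ε hε
    set L := I / (α * B ^ α) with hL
    have hcont : ContinuousAt (fun c : ℝ => I / (α * (c * B) ^ α)) 1 := by
      have h1 : ContinuousAt (fun c : ℝ => (c * B) ^ α) 1 := by
        apply ContinuousAt.rpow_const (by fun_prop)
        left; simp [hB.ne']
      have hne : α * ((1:ℝ) * B) ^ α ≠ 0 := by
        rw [one_mul]; positivity
      exact continuousAt_const.div (continuousAt_const.mul h1) hne
    have hφ1 : I / (α * ((1:ℝ) * B) ^ α) < L + ε := by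
      rw [one_mul, hL]; linarith
    have hev : ∀ᶠ c in 𝓝 (1:ℝ), I / (α * (c * B) ^ α) < L + ε :=
      hcont.tendsto.eventually_lt_const hφ1
    obtain ⟨c, hcφ, hc0, hc1⟩ : ∃ c : ℝ, (I / (α * (c * B) ^ α) < L + ε) ∧ 0 < c ∧ c < 1 := by
      have h2 : ∀ᶠ c in 𝓝[<] (1:ℝ),
          (I / (α * (c * B) ^ α) < L + ε) ∧ 0 < c ∧ c < 1 :=
        (hev.filter_mono nhdsWithin_le_nhds).and
          (((eventually_gt_nhds one_pos).filter_mono nhdsWithin_le_nhds).and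
            self_mem_nhdsWithin)
      exact h2.exists
    have hlow := key B hB
    have hhigh := key (c * B) (mul_pos hc0 hB)
    have e1 : ∀ᶠ h in 𝓝[>] (0:ℝ),
        L - ε < (p {y | B / h < ‖y‖ ∧ ‖y‖⁻¹ • y ∈ U}).toReal * h ^ (-α) :=
      hlow.eventually_const_lt (by linarith)
    have e2 : ∀ᶠ h in 𝓝[>] (0:ℝ),
        (p {y | c * B / h < ‖y‖ ∧ ‖y‖⁻¹ • y ∈ U}).toReal * h ^ (-α) < L + ε :=
      hhigh.eventually_lt_const hcφ
    filter_upwards [e1, e2, self_mem_nhdsWithin] with h h1 h2 hh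
    have hh : (0:ℝ) < h := hh
    have hhα : (0:ℝ) ≤ h ^ (-α) := Real.rpow_nonneg hh.le _
    have hcB : c * B / h < B / h :=
      (div_lt_div_iff₀ hh hh).mpr (by nlinarith [mul_pos (mul_pos (sub_pos.mpr hc1) hB) hh])
    have hsub1 : (p {y | B / h ≤ ‖y‖ ∧ ‖y‖⁻¹ • y ∈ U}).toReal
        ≤ (p {y | c * B / h < ‖y‖ ∧ ‖y‖⁻¹ • y ∈ U}).toReal := by
      refine ENNReal.toReal_mono (measure_ne_top p _) (measure_mono ?_)
      rintro y ⟨hy1, hy2⟩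
      exact ⟨lt_of_lt_of_le hcB hy1, hy2⟩
    have hsub2 : (p {y | B / h < ‖y‖ ∧ ‖y‖⁻¹ • y ∈ U}).toReal
        ≤ (p {y | B / h ≤ ‖y‖ ∧ ‖y‖⁻¹ • y ∈ U}).toReal := by
      refine ENNReal.toReal_mono (measure_ne_top p _) (measure_mono ?_)
      rintro y ⟨hy1, hy2⟩
      exact ⟨hy1.le, hy2⟩
    rw [Real.dist_eq, abs_lt]
    have hm1 := mul_le_mul_of_nonneg_right hsub1 hhα
    have hm2 := mul_le_mul_of_nonneg_right hsub2 hhα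
    constructor <;> linarith
  -- value of the interval integral
  have h0mem : (0:ℝ) ∉ uIcc A B := by
    rw [Set.uIcc_of_le hAB.le]
    rintro ⟨h1, -⟩
    linarith
  have hint : (∫ r in A..B, r ^ (-(α + 1))) = (A ^ (-α) - B ^ (-α)) / α := by
    rw [integral_rpow (Or.inr ⟨by intro hcon; exact hα0.ne' (by linarith), h0mem⟩)]
    rw [show -(α + 1) + 1 = -α by ring, div_neg, ← neg_div, neg_sub]
  have hAα : (0:ℝ) < A ^ α := Real.rpow_pos_of_pos hA α
  have hBα : (0:ℝ) < B ^ α := Real.rpow_pos_of_pos hB α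
  have hval : (∫ r in A..B, r ^ (-(α + 1))) * I = I / (α * A ^ α) - I / (α * B ^ α) := by
    rw [hint, Real.rpow_neg hA.le, Real.rpow_neg hB.le]
    field_simp
  rw [hval]
  have hmain := (key A hA).sub key2
  refine hmain.congr' ?_
  filter_upwards [self_mem_nhdsWithin] with h hh
  have hh : (0:ℝ) < h := hh
  have hset : MeasurableSet {z : EuclideanSpace ℝ (Fin d) | A < ‖z‖ ∧ ‖z‖ < B ∧ ‖z‖⁻¹ • z ∈ U} := by
    have heq : {z : EuclideanSpace ℝ (Fin d) | A < ‖z‖ ∧ ‖z‖ < B ∧ ‖z‖⁻¹ • z ∈ U}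
        = (fun z : EuclideanSpace ℝ (Fin d) => ‖z‖) ⁻¹' (Ioo A B)
          ∩ (fun z : EuclideanSpace ℝ (Fin d) => ‖z‖⁻¹ • z) ⁻¹' U := by
      ext z
      simp [mem_Ioo, and_assoc]
    rw [heq]
    exact (measurable_norm measurableSet_Ioo).inter (hmeas2 hUopen.measurableSet)
  rw [Measure.map_apply (measurable_const_smul h) hset]
  have hpre : (fun z : EuclideanSpace ℝ (Fin d) => h • z) ⁻¹'
        {z | A < ‖z‖ ∧ ‖z‖ < B ∧ ‖z‖⁻¹ • z ∈ U}
      = {y | A / h < ‖y‖ ∧ ‖y‖⁻¹ • y ∈ U} \ {y | B / h ≤ ‖y‖ ∧ ‖y‖⁻¹ • y ∈ U} := by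
    ext y
    simp only [mem_preimage, mem_setOf_eq, mem_diff]
    have hnorm : ‖h • y‖ = h * ‖y‖ := by
      rw [norm_smul, Real.norm_eq_abs, abs_of_pos hh]
    have hdir : ‖y‖ ≠ 0 → ‖h • y‖⁻¹ • (h • y) = ‖y‖⁻¹ • y := by
      intro hy0
      rw [hnorm, mul_inv, smul_smul]
      congr 1
      field_simp
    constructor
    · rintro ⟨h1, h2, h3⟩
      rw [hnorm] at h1 h2
      have hy0 : ‖y‖ ≠ 0 := by
        intro h0
        rw [h0, mul_zero] at h1
        linarith
      rw [hdir hy0] at h3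
      refine ⟨⟨(div_lt_iff₀ hh).mpr (by linarith), h3⟩, ?_⟩
      rintro ⟨hc, -⟩
      rw [div_le_iff₀ hh] at hc
      linarith
    · rintro ⟨⟨h1, h3⟩, hn⟩
      have hy : (0:ℝ) < ‖y‖ := lt_trans (div_pos hA hh) h1
      refine ⟨?_, ?_, ?_⟩
      · rw [hnorm]
        rw [div_lt_iff₀ hh] at h1
        linarith
      · rw [hnorm]
        by_contra hc
        push_neg at hc
        exact hn ⟨(div_le_iff₀ hh).mpr (by linarith), h3⟩
      · rw [hdir hy.ne']
        exact h3
  have hmeasE' : NullMeasurableSet {y : EuclideanSpace ℝ (Fin d) | B / h ≤ ‖y‖ ∧ ‖y‖⁻¹ • y ∈ U} p := by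
    refine MeasurableSet.nullMeasurableSet ?_
    exact (measurableSet_le measurable_const measurable_norm).inter (hmeas2 hUopen.measurableSet)
  have hsub : {y : EuclideanSpace ℝ (Fin d) | B / h ≤ ‖y‖ ∧ ‖y‖⁻¹ • y ∈ U}
      ⊆ {y : EuclideanSpace ℝ (Fin d) | A / h < ‖y‖ ∧ ‖y‖⁻¹ • y ∈ U} := by
    rintro y ⟨hy1, hy2⟩
    refine ⟨lt_of_lt_of_le ?_ hy1, hy2⟩
    exact (div_lt_div_iff₀ hh hh).mpr (by nlinarith)
  rw [hpre, measure_diff hsub hmeasE' (measure_ne_top p _),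
    ENNReal.toReal_sub_of_le (measure_mono hsub) (measure_ne_top p _), sub_mul]
end
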